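/- Let 𝒯* ⊆ 𝒯 be an optimal r-test set with m* = |𝒯*|. Then any run of SGA returns an r-test set of size at most H_{n(n−1)/2}·m*, where H_N = ∑_{i=1}^{N} 1/i is the N-th harmonic number. -/

import Mathlib

open Finset

/-- The set of item pairs: 2-element subsets of the item set `S` (here the whole type `α`). -/
def itemPairs (α : Type*) [Fintype α] [DecidableEq α] : Finset (Finset α) :=
  Finset.univ.filter fun a => a.card = 2

/-- `⊥(a, F)`: the number of tests in the family `F` that differentiate the item pair `a`,
i.e. the tests `T` with `|T ∩ a| = 1`. -/
def diffBy {α : Type*} [DecidableEq α] (a : Finset α) (F : Finset (Finset α)) : ℕ :=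
  (F.filter fun T => (T ∩ a).card = 1).card

/-- `F` is an `r`-test set for the collection `𝒯`: `F ⊆ 𝒯` and every item pair is
differentiated by at least `r` tests of `F`. -/
def IsRTestSet {α : Type*} [Fintype α] [DecidableEq α]
    (r : ℕ) (𝒯 F : Finset (Finset α)) : Prop :=
  F ⊆ 𝒯 ∧ ∀ a ∈ itemPairs α, r ≤ diffBy a F

/-- The differentiation measure `#(T̄) = ∑_a max (r - ⊥(a,T̄), 0)` (truncated subtraction). -/
def dmeasure {α : Type*} [Fintype α] [DecidableEq α]
    (r : ℕ) (F : Finset (Finset α)) : ℕ :=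
  ∑ a ∈ itemPairs α, (r - diffBy a F)

/-- A run of the set cover greedy algorithm SGA: a sequence of distinct tests from `𝒯`,
each chosen greedily to minimize the differentiation measure of the selected family,
selections continue while the measure is positive, and the final measure is `0`. -/
structure SGARun {α : Type*} [Fintype α] [DecidableEq α]
    (r : ℕ) (𝒯 : Finset (Finset α)) (L : List (Finset α)) : Prop where
  nodup : L.Nodup
  mem : ∀ T ∈ L, T ∈ 𝒯
  greedy : ∀ i : Fin L.length, ∀ T ∈ 𝒯, T ∉ (L.take i).toFinset →
      dmeasure r (insert (L.get i) (L.take i).toFinset) ≤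
        dmeasure r (insert T (L.take i).toFinset)
  pos : ∀ i < L.length, 0 < dmeasure r (L.take i).toFinset
  done : dmeasure r L.toFinset = 0

section Aux
set_option linter.unusedSectionVars false
set_option linter.unusedVariables false
variable {α : Type*} [Fintype α] [DecidableEq α]

lemma diffBy_mono {a : Finset α} {F F' : Finset (Finset α)} (h : F ⊆ F') :
    diffBy a F ≤ diffBy a F' :=
  card_le_card (filter_subset_filter _ h)

lemma diffBy_insert {a T : Finset α} {F : Finset (Finset α)} (hT : T ∉ F) :
    diffBy a (insert T F) = diffBy a F + if (T ∩ a).card = 1 then 1 else 0 := by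
  unfold diffBy
  rw [filter_insert]
  split_ifs with h
  · rw [card_insert_of_notMem (fun hc => hT (mem_filter.1 hc).1)]
  · simp

lemma dmeasure_anti {r : ℕ} {F F' : Finset (Finset α)} (h : F ⊆ F') :
    dmeasure r F' ≤ dmeasure r F :=
  Finset.sum_le_sum fun a _ => Nat.sub_le_sub_left (diffBy_mono h) r

lemma dropBound {r : ℕ} {T : Finset α} {F : Finset (Finset α)} (hT : T ∉ F)
    {P : Finset (Finset α)} (hP : P ⊆ itemPairs α)
    (h : ∀ a ∈ P, (T ∩ a).card = 1 ∧ diffBy a F < r) :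
    dmeasure r (insert T F) + P.card ≤ dmeasure r F := by
  classical
  have hcard : P.card = ∑ a ∈ itemPairs α, if a ∈ P then 1 else 0 := by
    rw [Finset.sum_ite_mem, (Finset.inter_eq_right).2 hP, Finset.sum_const, smul_eq_mul, mul_one]
  rw [dmeasure, dmeasure, hcard, ← Finset.sum_add_distrib]
  apply Finset.sum_le_sum
  intro a _
  by_cases haP : a ∈ P
  · obtain ⟨h1, h2⟩ := h a haP
    rw [diffBy_insert hT, if_pos h1, if_pos haP]
    omega
  · have := diffBy_mono (subset_insert T F) (a := a)
    rw [if_neg haP]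
    omega

lemma itemPairs_card : (itemPairs α).card = Fintype.card α * (Fintype.card α - 1) / 2 := by
  have : itemPairs α = Finset.powersetCard 2 Finset.univ := by
    ext x; simp [itemPairs, Finset.mem_powersetCard]
  rw [this, Finset.card_powersetCard, Finset.card_univ, Nat.choose_two_right]

noncomputable def pickElt (s : Finset (Finset α)) : Finset α :=
  if h : s.Nonempty then h.choose else ∅

lemma pickElt_mem {s : Finset (Finset α)} (h : s.Nonempty) : pickElt s ∈ s := by
  rw [pickElt, dif_pos h]; exact h.choose_spec

noncomputable def greedyU (r : ℕ) (L : List (Finset α)) (A : Finset α → Finset (Finset α)) :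
    ℕ → Finset α → Finset (Finset α)
  | 0 => A
  | (i+1) => fun a =>
      if h : i < L.length then
        if (L.get ⟨i, h⟩ ∩ a).card = 1 ∧ diffBy a (L.take i).toFinset < r then
          (greedyU r L A i a).erase
            (if L.get ⟨i, h⟩ ∈ greedyU r L A i a then L.get ⟨i, h⟩
             else pickElt (greedyU r L A i a))
        else greedyU r L A i a
      else greedyU r L A i a

lemma greedyU_succ_subset (r : ℕ) (L : List (Finset α)) (A : Finset α → Finset (Finset α))
    (i : ℕ) (a : Finset α) : greedyU r L A (i+1) a ⊆ greedyU r L A i a := by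
  show (if h : i < L.length then _ else _ : Finset (Finset α)) ⊆ _
  split_ifs <;> first | exact erase_subset _ _ | exact Finset.Subset.refl _

lemma toFinset_take_succ (L : List (Finset α)) (i : ℕ) (h : i < L.length) :
    (L.take (i+1)).toFinset = insert (L.get ⟨i, h⟩) (L.take i).toFinset := by
  have h1 : L.take (i+1) = L.take i ++ [L.get ⟨i, h⟩] := by
    rw [List.take_succ]
    congr 1
    simp [List.getElem?_eq_getElem h, List.get_eq_getElem]
  rw [h1, List.toFinset_append]
  ext T
  simp [or_comm]

lemma get_not_mem_take {L : List (Finset α)} (hL : L.Nodup) (i : ℕ) (h : i < L.length) :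
    L.get ⟨i, h⟩ ∉ (L.take i).toFinset := by
  intro hmem
  rw [List.mem_toFinset] at hmem
  have h1 : (L.take (i+1)).Nodup := (List.take_sublist _ _).nodup hL
  have h2 : L.take (i+1) = L.take i ++ [L.get ⟨i, h⟩] := by
    rw [List.take_succ]
    congr 1
    simp [List.getElem?_eq_getElem h, List.get_eq_getElem]
  rw [h2, List.nodup_append] at h1
  exact h1.2.2 _ hmem _ (List.mem_singleton_self _) rfl

lemma greedyU_inv (r : ℕ) {L : List (Finset α)} (hL : L.Nodup)
    (A : Finset α → Finset (Finset α)) (a : Finset α)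
    (hAdiff : ∀ T ∈ A a, (T ∩ a).card = 1) (hAcard : (A a).card = r) :
    ∀ i, greedyU r L A i a ⊆ A a ∧
      (greedyU r L A i a).card = r - diffBy a (L.take i).toFinset ∧
      ∀ T ∈ greedyU r L A i a, T ∉ (L.take i).toFinset := by
  intro i
  induction i with
  | zero =>
    refine ⟨Finset.Subset.refl _, ?_, ?_⟩
    · simp [greedyU, diffBy, hAcard]
    · simp [greedyU]
  | succ i ih =>
    obtain ⟨ihsub, ihcard, ihnot⟩ := ih
    by_cases h : i < L.length
    · set S := L.get ⟨i, h⟩ with hS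
      have hSF : S ∉ (L.take i).toFinset := get_not_mem_take hL i h
      have hstep : (L.take (i+1)).toFinset = insert S (L.take i).toFinset :=
        toFinset_take_succ L i h
      have hdiff : diffBy a (L.take (i+1)).toFinset =
          diffBy a (L.take i).toFinset + if (S ∩ a).card = 1 then 1 else 0 := by
        rw [hstep, diffBy_insert hSF]
      have hunf : greedyU r L A (i+1) a =
          if (S ∩ a).card = 1 ∧ diffBy a (L.take i).toFinset < r then
            (greedyU r L A i a).erase
              (if S ∈ greedyU r L A i a then S else pickElt (greedyU r L A i a))
          else greedyU r L A i a := by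
        show (if h' : i < L.length then _ else _) = _
        rw [dif_pos h]
      by_cases hc : (S ∩ a).card = 1 ∧ diffBy a (L.take i).toFinset < r
      · rw [hunf, if_pos hc]
        set p := if S ∈ greedyU r L A i a then S else pickElt (greedyU r L A i a) with hp
        have hne : (greedyU r L A i a).Nonempty := by
          rw [← Finset.card_pos, ihcard]; omega
        have hpmem : p ∈ greedyU r L A i a := by
          rw [hp]; split_ifs with h'
          · exact h'
          · exact pickElt_mem hne
        refine ⟨(erase_subset _ _).trans ihsub, ?_, ?_⟩
        · rw [card_erase_of_mem hpmem, ihcard, hdiff, if_pos hc.1]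
          omega
        · intro T hT
          rw [hstep, Finset.mem_insert]
          rintro (rfl | hTi)
          · by_cases hSg : S ∈ greedyU r L A i a
            · rw [hp, if_pos hSg] at hT
              exact (Finset.notMem_erase _ _) hT
            · exact hSg (Finset.mem_of_mem_erase hT)
          · exact ihnot T (Finset.mem_of_mem_erase hT) hTi
      · rw [hunf, if_neg hc]
        have hSnotg : S ∉ greedyU r L A i a := by
          intro hSg
          have h1 : (S ∩ a).card = 1 := hAdiff S (ihsub hSg)
          have h2 : 0 < (greedyU r L A i a).card := Finset.card_pos.2 ⟨S, hSg⟩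
          rw [ihcard] at h2
          exact hc ⟨h1, by omega⟩
        refine ⟨ihsub, ?_, ?_⟩
        · rw [ihcard, hdiff]
          by_cases h1 : (S ∩ a).card = 1
          · have h2 : ¬ diffBy a (L.take i).toFinset < r := fun h2 => hc ⟨h1, h2⟩
            rw [if_pos h1]; omega
          · rw [if_neg h1]; omega
        · intro T hT
          rw [hstep, Finset.mem_insert]
          rintro (rfl | hTi)
          · exact hSnotg hT
          · exact ihnot T hT hTi
    · have htake : L.take (i+1) = L.take i := by
        rw [List.take_of_length_le (by omega), List.take_of_length_le (by omega)]
      have hunf : greedyU r L A (i+1) a = greedyU r L A i a := by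
        show (if h' : i < L.length then _ else _) = _
        rw [dif_neg h]
      rw [hunf, htake]
      exact ⟨ihsub, ihcard, ihnot⟩

end Aux

noncomputable def harm (m : ℕ) : ℝ := ∑ j ∈ Finset.range m, (1 : ℝ) / ((j : ℝ) + 1)

lemma harm_nonneg (m : ℕ) : 0 ≤ harm m :=
  Finset.sum_nonneg fun j _ => by positivity

lemma harm_mono {m m' : ℕ} (h : m ≤ m') : harm m ≤ harm m' :=
  Finset.sum_le_sum_of_subset_of_nonneg (Finset.range_subset_range.2 h)
    (fun j _ _ => by positivity)

lemma harm_key {a b d : ℕ} (hba : b ≤ a) (had : a ≤ d) (hd : 0 < d) :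
    ((a : ℝ) - (b : ℝ)) / (d : ℝ) ≤ harm a - harm b := by
  have h1 : harm a - harm b = ∑ j ∈ Finset.Ico b a, (1 : ℝ) / ((j : ℝ) + 1) := by
    rw [harm, harm, ← Finset.sum_Ico_eq_sub _ hba]
  rw [h1]
  have h2 : ∀ j ∈ Finset.Ico b a, (1 : ℝ) / (d : ℝ) ≤ (1 : ℝ) / ((j : ℝ) + 1) := by
    intro j hj
    rw [Finset.mem_Ico] at hj
    apply one_div_le_one_div_of_le
    · positivity
    · have : j + 1 ≤ d := by omega
      exact_mod_cast this
  calc ((a : ℝ) - (b : ℝ)) / (d : ℝ)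
      = ((a - b : ℕ) : ℝ) * ((1:ℝ) / d) := by
        rw [Nat.cast_sub hba]; ring
    _ = ∑ _j ∈ Finset.Ico b a, (1 : ℝ) / (d : ℝ) := by
        rw [Finset.sum_const, Nat.card_Ico, nsmul_eq_mul]
    _ ≤ _ := Finset.sum_le_sum h2

/-- any run of SGA returns an `r`-test set of size at most
`H_{n(n−1)/2}·m*`, where `H_N = ∑_{i=1}^N 1/i`. -/
theorem stmt_11 {α : Type*} [Fintype α] [DecidableEq α]
    (r : ℕ) (hr : 1 ≤ r) (hn : 2 ≤ Fintype.card α)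
    (𝒯 Fstar : Finset (Finset α)) (hFstar : IsRTestSet r 𝒯 Fstar)
    (hopt : ∀ F : Finset (Finset α), IsRTestSet r 𝒯 F → Fstar.card ≤ F.card)
    (L : List (Finset α)) (hrun : SGARun r 𝒯 L) :
    (L.length : ℝ) ≤
      (∑ i ∈ Finset.range (Fintype.card α * (Fintype.card α - 1) / 2),
          (1 : ℝ) / ((i : ℝ) + 1)) * (Fstar.card : ℝ) := by
  classical
  obtain ⟨hFsub, hFcov⟩ := hFstar
  -- choose, for each pair a, a set A a of r tests from Fstar differentiating a
  have hex : ∀ a : Finset α, ∃ s : Finset (Finset α),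
      s ⊆ Fstar ∧ (∀ T ∈ s, (T ∩ a).card = 1) ∧ (a ∈ itemPairs α → s.card = r) := by
    intro a
    by_cases ha : a ∈ itemPairs α
    · obtain ⟨s, hs, hcard⟩ := Finset.exists_subset_card_eq
        (s := Fstar.filter fun T => (T ∩ a).card = 1) (hFcov a ha)
      exact ⟨s, hs.trans (filter_subset _ _),
        fun T hT => (mem_filter.1 (hs hT)).2, fun _ => hcard⟩
    · exact ⟨∅, by simp, by simp, fun h => absurd h ha⟩
  choose A hAsub hAdiff hAcard using hex
  set k := L.length with hk
  set g : ℕ → Finset α → Finset (Finset α) := greedyU r L A with hg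
  set u : ℕ → Finset α → ℕ :=
    fun i T => ((itemPairs α).filter fun a => T ∈ g i a).card with hu
  set μ : ℕ → ℕ := fun i => dmeasure r ((L.take i).toFinset) with hμ
  have hinv : ∀ a ∈ itemPairs α, ∀ i, g i a ⊆ A a ∧
      (g i a).card = r - diffBy a ((L.take i).toFinset) ∧
      ∀ T ∈ g i a, T ∉ (L.take i).toFinset :=
    fun a ha i => greedyU_inv r hrun.nodup A a (hAdiff a) (hAcard a ha) i
  -- double counting : total number of uncovered units equals the measure
  have f3 : ∀ i, ∑ T ∈ Fstar, u i T = μ i := by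
    intro i
    calc ∑ T ∈ Fstar, u i T
        = ∑ T ∈ Fstar, ∑ a ∈ itemPairs α, if T ∈ g i a then 1 else 0 := by
          refine Finset.sum_congr rfl fun T _ => ?_
          exact Finset.card_filter _ _
      _ = ∑ a ∈ itemPairs α, ∑ T ∈ Fstar, if T ∈ g i a then 1 else 0 := Finset.sum_comm
      _ = ∑ a ∈ itemPairs α, (r - diffBy a ((L.take i).toFinset)) := by
          refine Finset.sum_congr rfl fun a ha => ?_
          obtain ⟨hsub, hcard, -⟩ := hinv a ha i
          rw [Finset.sum_ite_mem,
            (Finset.inter_eq_right).2 (hsub.trans (hAsub a)), Finset.sum_const,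
            smul_eq_mul, mul_one, hcard]
      _ = μ i := rfl
  -- u is nonincreasing in i
  have f4 : ∀ i T, u (i+1) T ≤ u i T := by
    intro i T
    apply card_le_card
    apply Finset.monotone_filter_right
    intro a _ hmem
    exact greedyU_succ_subset r L A i a hmem
  -- the greedy step drop dominates each T's uncovered-unit count
  have f2 : ∀ i, i < k → ∀ T ∈ Fstar, μ (i+1) + u i T ≤ μ i := by
    intro i hi T hT
    have hstep : (L.take (i+1)).toFinset = insert (L.get ⟨i, hi⟩) ((L.take i).toFinset) :=
      toFinset_take_succ L i hi
    by_cases hTF : T ∈ (L.take i).toFinset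
    · have hu0 : u i T = 0 := by
        simp only [hu]
        rw [Finset.card_eq_zero, Finset.filter_eq_empty_iff]
        intro a ha hmem
        exact (hinv a ha i).2.2 T hmem hTF
      rw [hu0, add_zero]
      have : (L.take i).toFinset ⊆ (L.take (i+1)).toFinset := by
        rw [hstep]; exact subset_insert _ _
      exact dmeasure_anti this
    · have hdrop : dmeasure r (insert T ((L.take i).toFinset)) + u i T ≤ μ i := by
        apply dropBound hTF (filter_subset _ _)
        intro a ha
        rw [Finset.mem_filter] at ha
        obtain ⟨hsub, hcard, -⟩ := hinv a ha.1 i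
        refine ⟨hAdiff a T (hsub ha.2), ?_⟩
        have : 0 < (g i a).card := Finset.card_pos.2 ⟨T, ha.2⟩
        omega
      have hgreedy : μ (i+1) ≤ dmeasure r (insert T ((L.take i).toFinset)) := by
        have := hrun.greedy ⟨i, hi⟩ T (hFsub hT) hTF
        simp only [hμ]
        rw [hstep]
        exact this
      omega
  -- each greedy step strictly decreases the measure
  have f1 : ∀ i, i < k → μ (i+1) + 1 ≤ μ i := by
    intro i hi
    have hpos : 0 < μ i := hrun.pos i hi
    have hex1 : ∃ a ∈ itemPairs α, diffBy a ((L.take i).toFinset) < r := by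
      by_contra hcon
      push_neg at hcon
      have : μ i = 0 := by
        simp only [hμ, dmeasure]
        exact Finset.sum_eq_zero fun a ha => by
          have := hcon a ha; omega
      omega
    obtain ⟨a, ha, hlt⟩ := hex1
    have hexT : ∃ T ∈ Fstar, (T ∩ a).card = 1 ∧ T ∉ (L.take i).toFinset := by
      by_contra hcon
      push_neg at hcon
      have hsub : Fstar.filter (fun T => (T ∩ a).card = 1) ⊆
          ((L.take i).toFinset).filter (fun T => (T ∩ a).card = 1) := by
        intro T hTm
        rw [Finset.mem_filter] at hTm ⊢
        exact ⟨hcon T hTm.1 hTm.2, hTm.2⟩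
      have h2 : diffBy a Fstar ≤ diffBy a ((L.take i).toFinset) := card_le_card hsub
      have h3 := hFcov a ha
      omega
    obtain ⟨T, hT, hTd, hTF⟩ := hexT
    have hdrop : dmeasure r (insert T ((L.take i).toFinset)) + 1 ≤ μ i := by
      have := dropBound (r := r) hTF (P := {a})
        (Finset.singleton_subset_iff.2 ha)
        (fun b hb => by rw [Finset.mem_singleton] at hb; subst hb; exact ⟨hTd, hlt⟩)
      simpa using this
    have hgreedy : μ (i+1) ≤ dmeasure r (insert T ((L.take i).toFinset)) := by
      have := hrun.greedy ⟨i, hi⟩ T (hFsub hT) hTF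
      simp only [hμ]
      rw [toFinset_take_succ L i hi]
      exact this
    omega
  -- the drop at step i
  have hdle : ∀ i, i < k → μ (i+1) ≤ μ i := fun i hi => by have := f1 i hi; omega
  -- main real chain
  set M := Fintype.card α * (Fintype.card α - 1) / 2 with hM
  have hNM : (itemPairs α).card = M := itemPairs_card
  have main : (k : ℝ) ≤ ∑ T ∈ Fstar, (harm (u 0 T) - harm (u k T)) := by
    have step1 : (k : ℝ) = ∑ i ∈ Finset.range k, (1 : ℝ) := by simp
    rw [step1]
    have step2 : ∀ i ∈ Finset.range k,
        (1 : ℝ) ≤ ∑ T ∈ Fstar, (harm (u i T) - harm (u (i+1) T)) := by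
      intro i hi
      rw [Finset.mem_range] at hi
      set d := μ i - μ (i+1) with hd
      have hd1 : 1 ≤ d := by have := f1 i hi; omega
      have hdc : (d : ℝ) = (μ i : ℝ) - (μ (i+1) : ℝ) := by
        rw [hd, Nat.cast_sub (hdle i hi)]
      have hsum : (d : ℝ) = ∑ T ∈ Fstar, ((u i T : ℝ) - (u (i+1) T : ℝ)) := by
        rw [Finset.sum_sub_distrib, hdc]
        congr 1
        · rw [← Nat.cast_sum, f3 i]
        · rw [← Nat.cast_sum, f3 (i+1)]
      have hdne : (d : ℝ) ≠ 0 := by positivity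
      have h1 : (1 : ℝ) = ∑ T ∈ Fstar, ((u i T : ℝ) - (u (i+1) T : ℝ)) / (d : ℝ) := by
        rw [← Finset.sum_div, ← hsum, div_self hdne]
      rw [h1]
      apply Finset.sum_le_sum
      intro T hT
      exact harm_key (f4 i T) (by have := f2 i hi T hT; omega) hd1
    calc ∑ i ∈ Finset.range k, (1 : ℝ)
        ≤ ∑ i ∈ Finset.range k, ∑ T ∈ Fstar, (harm (u i T) - harm (u (i+1) T)) :=
          Finset.sum_le_sum step2
      _ = ∑ T ∈ Fstar, ∑ i ∈ Finset.range k, (harm (u i T) - harm (u (i+1) T)) :=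
          Finset.sum_comm
      _ = ∑ T ∈ Fstar, (harm (u 0 T) - harm (u k T)) := by
          refine Finset.sum_congr rfl fun T _ => ?_
          exact Finset.sum_range_sub' (fun i => harm (u i T)) k
  have final : ∑ T ∈ Fstar, (harm (u 0 T) - harm (u k T)) ≤ (Fstar.card : ℝ) * harm M := by
    calc ∑ T ∈ Fstar, (harm (u 0 T) - harm (u k T))
        ≤ ∑ T ∈ Fstar, harm M := by
          apply Finset.sum_le_sum
          intro T _
          have h1 : harm (u 0 T) ≤ harm M := by
            apply harm_mono
            rw [← hNM]
            exact (Finset.card_filter_le _ _)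
          have h2 : 0 ≤ harm (u k T) := harm_nonneg _
          linarith
      _ = (Fstar.card : ℝ) * harm M := by
          rw [Finset.sum_const, nsmul_eq_mul]
  have : (k : ℝ) ≤ (Fstar.card : ℝ) * harm M := le_trans main final
  rw [hk] at this
  calc (L.length : ℝ) ≤ (Fstar.card : ℝ) * harm M := this
    _ = harm M * (Fstar.card : ℝ) := mul_comm _ _
    _ = _ := by rw [harm, hM]
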